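/- Let A ∈ B(H), b, c ∈ H and set C := closure of span{Aⁿ c : n ≥ 0} (the controllable subspace) and O := closure of span{A*ⁿ b : n ≥ 0} (the observable subspace). Let M := C ⊖ (O^⊥ ∩ C) with orthogonal projection Q, and set A₀ := Q A|_M, b₀ := Q b, c₀ := Q c. Then ⟪b₀, A₀ⁿ c₀⟫ = ⟪b, Aⁿ c⟫ for all n ≥ 0, the closed span of {A₀ⁿ c₀} is M, and the closed span of {A₀*ⁿ b₀} is M. -/

import Mathlib

open ContinuousLinearMap in
/-- Invariance passes to topological closures of spans. -/
lemma stmt14_aux_closure_inv {H : Type*} [NormedAddCommGroup H] [InnerProductSpace ℂ H]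
    (T : H →L[ℂ] H) (S : Submodule ℂ H) (h : ∀ s ∈ S, T s ∈ S) :
    ∀ x ∈ S.topologicalClosure, T x ∈ S.topologicalClosure := by
  intro x hx
  have hx' : x ∈ closure (S : Set H) := hx
  have : T x ∈ T '' closure (S : Set H) := ⟨x, hx', rfl⟩
  have h2 : T '' closure (S : Set H) ⊆ closure (T '' (S : Set H)) :=
    image_closure_subset_closure_image T.continuous
  have h3 : closure (T '' (S : Set H)) ⊆ closure (S : Set H) :=
    closure_mono (fun y ⟨s, hs, hys⟩ => hys ▸ h s hs)
  exact h3 (h2 this)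

/-- Iterated invariance. -/
lemma stmt14_aux_pow_inv {H : Type*} [NormedAddCommGroup H] [InnerProductSpace ℂ H]
    (T : H →L[ℂ] H) (W : Submodule ℂ H) (h : ∀ x ∈ W, T x ∈ W) :
    ∀ (n : ℕ), ∀ x ∈ W, (T ^ n) x ∈ W := by
  intro n
  induction n with
  | zero => intro x hx; simpa using hx
  | succ n ih =>
    intro x hx
    have : (T ^ (n + 1)) x = T ((T ^ n) x) := by
      rw [pow_succ']; rfl
    rw [this]
    exact h _ (ih x hx)

/-- Key semi-invariance lemma: powers of compression equal compression of powers. -/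
lemma stmt14_aux_key {H : Type*} [NormedAddCommGroup H] [InnerProductSpace ℂ H]
    (T Q : H →L[ℂ] H) (hQ : IsIdempotentElem Q) (W : Submodule ℂ H)
    (hW : ∀ x ∈ W, T x ∈ W) (hQW : ∀ x ∈ W, Q x = 0)
    (hmem : ∀ x : H, T (Q x) - Q (T (Q x)) ∈ W) :
    ∀ (n : ℕ) (x : H), ((Q * T * Q) ^ n) (Q x) = Q ((T ^ n) (Q x)) ∧
      (T ^ n) (Q x) - Q ((T ^ n) (Q x)) ∈ W := by
  have hQQ : ∀ y : H, Q (Q y) = Q y := by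
    intro y
    conv_rhs => rw [← hQ]
    rfl
  intro n
  induction n with
  | zero =>
    intro x
    refine ⟨by simpa using (hQQ x).symm, by simpa [hQQ x] using W.zero_mem⟩
  | succ n ih =>
    intro x
    obtain ⟨h1, h2⟩ := ih x
    set y := (T ^ n) (Q x) with hy
    have hstep : (T ^ (n + 1)) (Q x) = T y := by rw [pow_succ']; rfl
    have hTy : T y = T (Q y) + T (y - Q y) := by rw [← map_add]; congr 1; abel
    have hQTw : Q (T (y - Q y)) = 0 := hQW _ (hW _ h2)
    have hQTy : Q (T y) = Q (T (Q y)) := by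
      rw [hTy, map_add, hQTw, add_zero]
    constructor
    · have : ((Q * T * Q) ^ (n + 1)) (Q x) = (Q * T * Q) (((Q * T * Q) ^ n) (Q x)) := by
        rw [pow_succ']; rfl
      rw [this, h1, hstep, hQTy]
      show Q (T (Q (Q y))) = Q (T (Q y))
      rw [hQQ]
    · rw [hstep, hQTy, hTy]
      have : T (Q y) + T (y - Q y) - Q (T (Q y)) =
          (T (Q y) - Q (T (Q y))) + T (y - Q y) := by abel
      rw [this]
      exact W.add_mem (hmem y) (hW _ h2)

theorem stmt14 {H : Type*} [NormedAddCommGroup H] [InnerProductSpace ℂ H] [CompleteSpace H]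
    (A : H →L[ℂ] H) (b c : H)
    (Q : H →L[ℂ] H) (hQidem : IsIdempotentElem Q) (hQsa : IsSelfAdjoint Q)
    (hQran : LinearMap.range (Q : H →ₗ[ℂ] H) =
      (Submodule.span ℂ (Set.range fun n : ℕ => (A ^ n) c)).topologicalClosure ⊓
        (((Submodule.span ℂ (Set.range fun n : ℕ =>
            ((ContinuousLinearMap.adjoint A) ^ n) b)).topologicalClosure)ᗮ ⊓
          (Submodule.span ℂ (Set.range fun n : ℕ => (A ^ n) c)).topologicalClosure)ᗮ) :
    (∀ n : ℕ, @inner ℂ H _ (Q b) (((Q * A * Q) ^ n) (Q c)) =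
        @inner ℂ H _ b ((A ^ n) c)) ∧
      (Submodule.span ℂ
          (Set.range fun n : ℕ => ((Q * A * Q) ^ n) (Q c))).topologicalClosure =
        LinearMap.range (Q : H →ₗ[ℂ] H) ∧
      (Submodule.span ℂ
          (Set.range fun n : ℕ =>
            ((ContinuousLinearMap.adjoint (Q * A * Q)) ^ n) (Q b))).topologicalClosure =
        LinearMap.range (Q : H →ₗ[ℂ] H) := by
  classical
  set S : Submodule ℂ H := Submodule.span ℂ (Set.range fun n : ℕ => (A ^ n) c) with hS
  set SO : Submodule ℂ H := Submodule.span ℂ (Set.range fun n : ℕ =>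
    ((ContinuousLinearMap.adjoint A) ^ n) b) with hSO
  set C : Submodule ℂ H := S.topologicalClosure with hC
  set O : Submodule ℂ H := SO.topologicalClosure with hO
  set N : Submodule ℂ H := Oᗮ ⊓ C with hN
  set M : Submodule ℂ H := C ⊓ Nᗮ with hM
  have hQranM : LinearMap.range (Q : H →ₗ[ℂ] H) = M := hQran
  -- basic facts about Q
  have hQQ : ∀ y : H, Q (Q y) = Q y := fun y => by
    rw [← ContinuousLinearMap.mul_apply, hQidem]
  have hQmem : ∀ x : H, Q x ∈ M := fun x => hQranM ▸ LinearMap.mem_range_self _ x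
  have hQfix : ∀ x ∈ M, Q x = x := by
    intro x hx
    rw [← hQranM] at hx
    obtain ⟨y, rfl⟩ := hx
    exact hQQ y
  have hsa : ∀ x y : H, (inner ℂ (Q x) y : ℂ) = inner ℂ x (Q y) := by
    intro x y
    have : ContinuousLinearMap.adjoint Q = Q := by
      rw [← ContinuousLinearMap.star_eq_adjoint]; exact hQsa.star_eq
    calc (inner ℂ (Q x) y : ℂ) = inner ℂ ((ContinuousLinearMap.adjoint Q) x) y := by rw [this]
      _ = inner ℂ x (Q y) := ContinuousLinearMap.adjoint_inner_left Q y x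
  -- invariance facts
  have hSinv : ∀ s ∈ S, A s ∈ S := by
    intro s hs
    induction hs using Submodule.span_induction with
    | mem x hx =>
      obtain ⟨n, rfl⟩ := hx
      apply Submodule.subset_span
      exact ⟨n + 1, by simp [pow_succ', ContinuousLinearMap.mul_apply]⟩
    | zero => simpa using S.zero_mem
    | add x y _ _ hx hy => rw [map_add]; exact S.add_mem hx hy
    | smul a x _ hx => rw [map_smul]; exact S.smul_mem a hx
  have hSOinv : ∀ s ∈ SO, (ContinuousLinearMap.adjoint A) s ∈ SO := by
    intro s hs
    induction hs using Submodule.span_induction with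
    | mem x hx =>
      obtain ⟨n, rfl⟩ := hx
      apply Submodule.subset_span
      exact ⟨n + 1, by simp [pow_succ', ContinuousLinearMap.mul_apply]⟩
    | zero => simpa using SO.zero_mem
    | add x y _ _ hx hy => rw [map_add]; exact SO.add_mem hx hy
    | smul a x _ hx => rw [map_smul]; exact SO.smul_mem a hx
  have hCA : ∀ x ∈ C, A x ∈ C := stmt14_aux_closure_inv A S hSinv
  have hOadj : ∀ x ∈ O, (ContinuousLinearMap.adjoint A) x ∈ O :=
    stmt14_aux_closure_inv _ SO hSOinv
  have hOperpA : ∀ x ∈ Oᗮ, A x ∈ Oᗮ := by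
    intro x hx
    rw [Submodule.mem_orthogonal]
    intro u hu
    have : (inner ℂ u (A x) : ℂ) = inner ℂ ((ContinuousLinearMap.adjoint A) u) x :=
      (ContinuousLinearMap.adjoint_inner_left A x u).symm
    rw [this]
    exact (Submodule.mem_orthogonal _ x).mp hx _ (hOadj u hu)
  have hCperpAdj : ∀ x ∈ Cᗮ, (ContinuousLinearMap.adjoint A) x ∈ Cᗮ := by
    intro x hx
    rw [Submodule.mem_orthogonal]
    intro u hu
    rw [ContinuousLinearMap.adjoint_inner_right]
    exact (Submodule.mem_orthogonal _ x).mp hx _ (hCA u hu)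
  have hNA : ∀ x ∈ N, A x ∈ N := fun x hx => ⟨hOperpA x hx.1, hCA x hx.2⟩
  have hNperpAdj : ∀ x ∈ Nᗮ, (ContinuousLinearMap.adjoint A) x ∈ Nᗮ := by
    intro x hx
    rw [Submodule.mem_orthogonal]
    intro u hu
    rw [ContinuousLinearMap.adjoint_inner_right]
    exact (Submodule.mem_orthogonal _ x).mp hx _ (hNA u hu)
  -- Q kills N and Cᗮ
  have hMC : M ≤ C := inf_le_left
  have hMNperp : M ≤ Nᗮ := inf_le_right
  have hQN : ∀ z ∈ N, Q z = 0 := by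
    intro z hz
    have h0 : (inner ℂ (Q z) (Q z) : ℂ) = 0 := by
      rw [hsa, hQQ]
      exact (Submodule.mem_orthogonal N (Q z)).mp (hMNperp (hQmem z)) z hz
    exact inner_self_eq_zero.mp h0
  have hQCperp : ∀ z ∈ Cᗮ, Q z = 0 := by
    intro z hz
    have h0 : (inner ℂ (Q z) (Q z) : ℂ) = 0 := by
      rw [hsa, hQQ, inner_eq_zero_symm]
      exact (Submodule.mem_orthogonal C z).mp hz _ (hMC (hQmem z))
    exact inner_self_eq_zero.mp h0
  -- general orthogonality of M against (1-Q)-parts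
  have hMperpGen : ∀ (y : H), ∀ m ∈ M, (inner ℂ m (y - Q y) : ℂ) = 0 := by
    intro y m hm
    rw [inner_sub_right, ← hsa, hQfix m hm, sub_self]
  -- N is closed, hence has an orthogonal projection
  have hNclosed : IsClosed (N : Set H) := by
    rw [hN, Submodule.coe_inf]
    exact O.isClosed_orthogonal.inter S.isClosed_topologicalClosure
  haveI : CompleteSpace N := hNclosed.completeSpace_coe
  have hNC : N ≤ C := inf_le_right
  -- elements of C decompose: the (1-Q)-part lies in N
  have cInN : ∀ u ∈ C, u - Q u ∈ N := by
    intro u hu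
    set v := u - Q u with hv
    have hvC : v ∈ C := C.sub_mem hu (hMC (hQmem u))
    have hn : (↑(N.orthogonalProjectionOnto v) : H) ∈ N := Submodule.coe_mem _
    have hvn : v - ↑(N.orthogonalProjectionOnto v) ∈ Nᗮ :=
      Submodule.sub_starProjection_mem_orthogonal (K := N) v
    have hvnM : v - ↑(N.orthogonalProjectionOnto v) ∈ M :=
      ⟨C.sub_mem hvC (hNC hn), hvn⟩
    have h0 : (inner ℂ (v - ↑(N.orthogonalProjectionOnto v))
        (v - ↑(N.orthogonalProjectionOnto v)) : ℂ) = 0 := by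
      rw [inner_sub_right]
      have h1 : (inner ℂ (v - (↑(N.orthogonalProjectionOnto v) : H)) v : ℂ) = 0 :=
        hMperpGen u _ hvnM
      have h2 : (inner ℂ (v - (↑(N.orthogonalProjectionOnto v) : H))
          (↑(N.orthogonalProjectionOnto v) : H) : ℂ) = 0 := by
        rw [inner_eq_zero_symm]
        exact (Submodule.mem_orthogonal N _).mp hvn _ hn
      rw [h1, h2, sub_zero]
    have hz := inner_self_eq_zero.mp h0
    have hveq : v = ↑(N.orthogonalProjectionOnto v) := by rwa [sub_eq_zero] at hz
    rw [hveq]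
    exact hn
  -- elements of Nᗮ decompose: the (1-Q)-part lies in Cᗮ
  have nPerpCperp : ∀ y ∈ Nᗮ, y - Q y ∈ Cᗮ := by
    intro y hy
    have hw1 : y - Q y ∈ Nᗮ := Nᗮ.sub_mem hy (hMNperp (hQmem y))
    rw [Submodule.mem_orthogonal]
    intro u hu
    have hsplit : (inner ℂ u (y - Q y) : ℂ) =
        inner ℂ (Q u) (y - Q y) + inner ℂ (u - Q u) (y - Q y) := by
      rw [← inner_add_left]
      congr 1
      abel
    rw [hsplit, hMperpGen y (Q u) (hQmem u),
      (Submodule.mem_orthogonal N _).mp hw1 _ (cInN u hu), add_zero]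
  -- the two key compression identities
  have keyA := stmt14_aux_key A Q hQidem N hNA hQN
    (fun x => cInN _ (hCA _ (hMC (hQmem x))))
  have keyAadj := stmt14_aux_key (ContinuousLinearMap.adjoint A) Q hQidem Cᗮ hCperpAdj hQCperp
    (fun x => nPerpCperp _ (hNperpAdj _ (hMNperp (hQmem x))))
  have hNpow : ∀ n : ℕ, ∀ z ∈ N, (A ^ n) z ∈ N := stmt14_aux_pow_inv A N hNA
  have hCpow : ∀ n : ℕ, ∀ z ∈ C, (A ^ n) z ∈ C := stmt14_aux_pow_inv A C hCA
  have hcC : c ∈ C := S.le_topologicalClosure (Submodule.subset_span ⟨0, by simp⟩)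
  have hbO : b ∈ O := SO.le_topologicalClosure (Submodule.subset_span ⟨0, by simp⟩)
  have hQAc : ∀ n : ℕ, Q ((A ^ n) (Q c)) = Q ((A ^ n) c) := by
    intro n
    have h2 : (A ^ n) (c - Q c) ∈ N := hNpow n _ (cInN c hcC)
    have h3 : Q ((A ^ n) c - (A ^ n) (Q c)) = 0 := by
      rw [← map_sub]
      exact hQN _ h2
    rw [map_sub] at h3
    exact (sub_eq_zero.mp h3).symm
  have hbQ : ∀ x ∈ C, (inner ℂ b (x - Q x) : ℂ) = 0 := by
    intro x hx
    exact (Submodule.mem_orthogonal O _).mp (cInN x hx).1 b hbO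
  have hMclosed : IsClosed (M : Set H) := by
    rw [hM, Submodule.coe_inf]
    exact S.isClosed_topologicalClosure.inter N.isClosed_orthogonal
  refine ⟨?_, ?_, ?_⟩
  -- Part 1: same power series
  · intro n
    rw [(keyA n c).1]
    calc (inner ℂ (Q b) (Q ((A ^ n) (Q c))) : ℂ)
        = inner ℂ b (Q (Q ((A ^ n) (Q c)))) := hsa b _
      _ = inner ℂ b (Q ((A ^ n) (Q c))) := by rw [hQQ]
      _ = inner ℂ b (Q ((A ^ n) c)) := by rw [hQAc n]
      _ = inner ℂ b ((A ^ n) c) := by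
          have h := hbQ ((A ^ n) c) (hCpow n c hcC)
          rw [inner_sub_right] at h
          exact (sub_eq_zero.mp h).symm
  -- Part 2: controllability
  · have hgen : (fun n : ℕ => ((Q * A * Q) ^ n) (Q c)) = fun n : ℕ => Q ((A ^ n) c) :=
      funext fun n => by rw [(keyA n c).1, hQAc n]
    rw [hgen, hQranM]
    apply le_antisymm
    · apply Submodule.topologicalClosure_minimal
      · rw [Submodule.span_le]
        rintro _ ⟨n, rfl⟩
        exact hQmem _
      · exact hMclosed
    · intro x hx
      have hxC : x ∈ closure (S : Set H) := hMC hx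
      have hxQ : Q x = x := hQfix x hx
      have hQcl : Q x ∈ closure (Q '' (S : Set H)) :=
        image_closure_subset_closure_image Q.continuous ⟨x, hxC, rfl⟩
      have himg : ∀ s ∈ S, Q s ∈ Submodule.span ℂ (Set.range fun n : ℕ => Q ((A ^ n) c)) := by
        intro s hs
        induction hs using Submodule.span_induction with
        | mem y hy =>
          obtain ⟨n, rfl⟩ := hy
          exact Submodule.subset_span ⟨n, rfl⟩
        | zero => rw [map_zero]; exact Submodule.zero_mem _
        | add y z _ _ hy hz => rw [map_add]; exact Submodule.add_mem _ hy hz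
        | smul a y _ hy => rw [map_smul]; exact Submodule.smul_mem _ a hy
      have : x ∈ closure ((Submodule.span ℂ (Set.range fun n : ℕ => Q ((A ^ n) c))) : Set H) := by
        rw [← hxQ]
        exact closure_mono (by rintro _ ⟨s, hs, rfl⟩; exact himg s hs) hQcl
      exact this
  -- Part 3: observability
  · have hadjf : ContinuousLinearMap.adjoint (Q * A * Q) =
        Q * ContinuousLinearMap.adjoint A * Q := by
      rw [← ContinuousLinearMap.star_eq_adjoint, ← ContinuousLinearMap.star_eq_adjoint,
        star_mul, star_mul, hQsa.star_eq, mul_assoc]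
    have hgen3 : (fun n : ℕ => ((ContinuousLinearMap.adjoint (Q * A * Q)) ^ n) (Q b)) =
        fun n : ℕ => Q (((ContinuousLinearMap.adjoint A) ^ n) (Q b)) :=
      funext fun n => by rw [hadjf, (keyAadj n b).1]
    rw [hgen3, hQranM]
    set T3 : Submodule ℂ H :=
      Submodule.span ℂ (Set.range fun n : ℕ => Q (((ContinuousLinearMap.adjoint A) ^ n) (Q b)))
      with hT3
    set K : Submodule ℂ H := T3.topologicalClosure with hK
    haveI : CompleteSpace K := T3.isClosed_topologicalClosure.completeSpace_coe
    have hKM : K ≤ M := by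
      apply Submodule.topologicalClosure_minimal
      · rw [Submodule.span_le]
        rintro _ ⟨n, rfl⟩
        exact hQmem _
      · exact hMclosed
    apply le_antisymm hKM
    intro x hx
    have hpK : (↑(K.orthogonalProjectionOnto x) : H) ∈ K := Submodule.coe_mem _
    have hw : x - ↑(K.orthogonalProjectionOnto x) ∈ Kᗮ :=
      Submodule.sub_starProjection_mem_orthogonal (K := K) x
    set w := x - (↑(K.orthogonalProjectionOnto x) : H) with hwdef
    have hwM : w ∈ M := M.sub_mem hx (hKM hpK)
    have hpa : ∀ n : ℕ, (ContinuousLinearMap.adjoint A) ^ n =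
        ContinuousLinearMap.adjoint (A ^ n) := by
      intro n
      rw [← ContinuousLinearMap.star_eq_adjoint, ← ContinuousLinearMap.star_eq_adjoint, star_pow]
    have hbn : ∀ n : ℕ, (inner ℂ (((ContinuousLinearMap.adjoint A) ^ n) b) w : ℂ) = 0 := by
      intro n
      have h1 : (inner ℂ (Q (((ContinuousLinearMap.adjoint A) ^ n) (Q b))) w : ℂ) = 0 :=
        (Submodule.mem_orthogonal K w).mp hw _
          (T3.le_topologicalClosure (Submodule.subset_span ⟨n, rfl⟩))
      rw [hsa, hQfix w hwM, hpa n, ContinuousLinearMap.adjoint_inner_left, hsa] at h1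
      -- h1 : ⟪b, Q ((A ^ n) w)⟫ = 0
      have hAw : (A ^ n) w ∈ C := hCpow n w (hMC hwM)
      have h2 := hbQ _ hAw
      rw [inner_sub_right, h1, sub_zero] at h2
      rw [hpa n, ContinuousLinearMap.adjoint_inner_left]
      exact h2
    have hwSOperp : w ∈ SOᗮ := by
      rw [Submodule.mem_orthogonal]
      intro u hu
      induction hu using Submodule.span_induction with
      | mem y hy =>
        obtain ⟨n, rfl⟩ := hy
        exact hbn n
      | zero => simp
      | add y z _ _ hy hz => rw [inner_add_left, hy, hz, add_zero]
      | smul a y _ hy => rw [inner_smul_left, hy, mul_zero]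
    have hOperpEq : Oᗮ = SOᗮ := by
      haveI : CompleteSpace (SOᗮ : Submodule ℂ H) := SO.isClosed_orthogonal.completeSpace_coe
      haveI : Submodule.HasOrthogonalProjection (SOᗮ) := Submodule.HasOrthogonalProjection.ofCompleteSpace _
      rw [hO, ← Submodule.orthogonal_orthogonal_eq_closure, Submodule.orthogonal_orthogonal]
    have hwN : w ∈ N := ⟨hOperpEq ▸ hwSOperp, hMC hwM⟩
    have hw0 : w = 0 := by
      have h := hQN _ hwN
      rwa [hQfix _ hwM] at h
    have hxp : x = ↑(K.orthogonalProjectionOnto x) := by rwa [sub_eq_zero] at hw0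
    rw [hxp]
    exact hpK
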